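/- Fusion relations from the discrete Liouville equation with open boundary: let φ : ℤ → ℂ and T_s(u) (s ∈ ℤ with s ≥ −1, u ∈ ℤ) satisfy: T_s(u+1)·T_s(u−1) − T_{s+1}(u)·T_{s−1}(u) = φ(u+s)·φ(u−s−2) for all s ≥ 0 and u ∈ ℤ; T_{−1}(u) = 0 for all u; T_0(u) = φ(u−1) for all u; and T_s(u) ≠ 0 for all s ≥ 0 and u. Then for all integers s ≥ 0 and all u ∈ ℤ the fusion relations hold: T_s(u−1)·T_1(u+s) = φ(u+s−2)·T_{s+1}(u) + φ(u+s)·T_{s−1}(u−2), and T_s(u+1)·T_1(u−s) = φ(u−s)·T_{s+1}(u) + φ(u−s−2)·T_{s−1}(u+2). -/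

import Mathlib

/-- **Fusion relations from the discrete Liouville equation with open boundary.**
Let `φ : ℤ → ℂ` and `T_s(u)` (`s ≥ −1`) satisfy the discrete Liouville equation
`T_s(u+1)·T_s(u−1) − T_{s+1}(u)·T_{s−1}(u) = φ(u+s)·φ(u−s−2)` for `s ≥ 0`, together with
`T_{−1}(u) = 0`, `T_0(u) = φ(u−1)`, and `T_s(u) ≠ 0` for `s ≥ 0`.  Then for all `s ≥ 0` the
fusion relations `T_s(u−1)·T_1(u+s) = φ(u+s−2)·T_{s+1}(u) + φ(u+s)·T_{s−1}(u−2)` and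
`T_s(u+1)·T_1(u−s) = φ(u−s)·T_{s+1}(u) + φ(u−s−2)·T_{s−1}(u+2)` hold. -/
theorem discrete_liouville_fusion (φ : ℤ → ℂ) (T : ℤ → ℤ → ℂ)
    (hT : ∀ s : ℤ, 0 ≤ s → ∀ u : ℤ,
      T s (u+1) * T s (u-1) - T (s+1) u * T (s-1) u = φ (u+s) * φ (u-s-2))
    (hm1 : ∀ u : ℤ, T (-1) u = 0)
    (h0 : ∀ u : ℤ, T 0 u = φ (u-1))
    (hnz : ∀ s : ℤ, 0 ≤ s → ∀ u : ℤ, T s u ≠ 0) :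
    ∀ s : ℤ, 0 ≤ s → ∀ u : ℤ,
      T s (u-1) * T 1 (u+s) = φ (u+s-2) * T (s+1) u + φ (u+s) * T (s-1) (u-2) ∧
      T s (u+1) * T 1 (u-s) = φ (u-s) * T (s+1) u + φ (u-s-2) * T (s-1) (u+2) := by
  intro s hs
  refine Int.le_induction
    (motive := fun s _ => ∀ u : ℤ,
      T s (u-1) * T 1 (u+s) = φ (u+s-2) * T (s+1) u + φ (u+s) * T (s-1) (u-2) ∧
      T s (u+1) * T 1 (u-s) = φ (u-s) * T (s+1) u + φ (u-s-2) * T (s-1) (u+2))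
    ?_ (fun s hs ih => ?_) s hs
  · intro u
    constructor
    · rw [show u + (0:ℤ) - 2 = (u-1) - 1 by ring, show u + (0:ℤ) = u by ring,
        show (0:ℤ) - 1 = -1 by ring, show (0:ℤ) + 1 = 1 by ring, hm1, h0]
      ring
    · rw [show u - (0:ℤ) = u by ring,
        show (0:ℤ) - 1 = -1 by ring, show (0:ℤ) + 1 = 1 by ring, hm1, h0,
        show u + 1 - 1 = u by ring]
      ring
  · intro u
    have h1 := (ih (u+1)).1
    rw [show u+1+s-2 = u+s-1 by ring, show u+1+s = u+s+1 by ring, show u+1-1 = u by ring,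
      show u+1-2 = u-1 by ring] at h1
    have h2 := (ih (u-1)).2
    rw [show u-1-s-2 = u-s-3 by ring, show u-1-s = u-s-1 by ring, show u-1+1 = u by ring,
      show u-1+2 = u+1 by ring] at h2
    have hir1 := hT s hs (u-1)
    rw [show u-1+1 = u by ring, show u-1-1 = u-2 by ring, show u-1+s = u+s-1 by ring,
      show u-1-s-2 = u-s-3 by ring] at hir1
    have hir2 := hT s hs (u+1)
    rw [show u+1+1 = u+2 by ring, show u+1-1 = u by ring, show u+1+s = u+s+1 by ring,
      show u+1-s-2 = u-s-1 by ring] at hir2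
    have hir3 := hT (s+1) (by linarith) u
    rw [show s+1+1 = s+2 by ring, show s+1-1 = s by ring, show u+(s+1) = u+s+1 by ring,
      show u-(s+1)-2 = u-s-3 by ring] at hir3
    have hTnz := hnz s hs u
    constructor
    · rw [show u+(s+1)-2 = u+s-1 by ring, show u+(s+1) = u+s+1 by ring,
        show s+1+1 = s+2 by ring, show s+1-1 = s by ring]
      have key : T s u * (T (s+1) (u-1) * T 1 (u+s+1)
          - (φ (u+s-1) * T (s+2) u + φ (u+s+1) * T s (u-2))) = 0 := by
        linear_combination T (s+1) (u-1) * h1 + φ (u+s-1) * hir3 - φ (u+s+1) * hir1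
      rcases mul_eq_zero.mp key with h | h
      · exact absurd h hTnz
      · exact sub_eq_zero.mp h
    · rw [show u-(s+1)-2 = u-s-3 by ring, show u-(s+1) = u-s-1 by ring,
        show s+1+1 = s+2 by ring, show s+1-1 = s by ring]
      have key : T s u * (T (s+1) (u+1) * T 1 (u-s-1)
          - (φ (u-s-1) * T (s+2) u + φ (u-s-3) * T s (u+2))) = 0 := by
        linear_combination T (s+1) (u+1) * h2 + φ (u-s-1) * hir3 - φ (u-s-3) * hir2
      rcases mul_eq_zero.mp key with h | h
      · exact absurd h hTnz
      · exact sub_eq_zero.mp h
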